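/- Let X and Y be topological spaces, let F be a closed correspondence from X to Y, and let f : X → Y be a continuous selector of F. If F is homologically consistent, then for every n ≥ 0 and every homology class a ∈ H_n(F) one has H_n(f)(H_n(p_F)(a)) = H_n(q_F)(a); moreover H_n(p_F) : H_n(F) → H_n(X) is surjective, so the homomorphism H_n(f) : H_n(X) → H_n(Y) induced by f is completely determined by the two projections of F. -/

import Mathlib

open CategoryTheory AlgebraicTopology

/-- Degree-`n` singular homology with coefficients in a commutative ring `R`,
as a functor from topological spaces to `R`-modules: the homology of the
alternating face map complex of the free simplicial `R`-module on the singular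
simplicial set. -/
noncomputable def Hn (R : Type) [CommRing R] (n : ℕ) :
    TopCat.{0} ⥤ ModuleCat.{0} R :=
  TopCat.toSSet ⋙ ((SimplicialObject.whiskering _ _).obj (ModuleCat.free R)) ⋙
    alternatingFaceMapComplex (ModuleCat R) ⋙
    HomologicalComplex.homologyFunctor (ModuleCat R) (ComplexShape.down ℕ) n

/-- A correspondence `F ⊆ X × Y` with the subspace topology, as an object of `TopCat`. -/
def corr {X Y : Type} [TopologicalSpace X] [TopologicalSpace Y]
    (F : Set (X × Y)) : TopCat.{0} := TopCat.of F

/-- The first-coordinate projection `p_F : F → X` of a correspondence `F ⊆ X × Y`. -/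
def projX {X Y : Type} [TopologicalSpace X] [TopologicalSpace Y]
    (F : Set (X × Y)) : corr F ⟶ TopCat.of X :=
  TopCat.ofHom ⟨fun z => z.1.1, continuous_fst.comp continuous_subtype_val⟩

/-- The second-coordinate projection `q_F : F → Y` of a correspondence `F ⊆ X × Y`. -/
def projY {X Y : Type} [TopologicalSpace X] [TopologicalSpace Y]
    (F : Set (X × Y)) : corr F ⟶ TopCat.of Y :=
  TopCat.ofHom ⟨fun z => z.1.2, continuous_snd.comp continuous_subtype_val⟩

/-- **Theorem `thm:homF` of the paper**: let `f : X → Y` be a continuous selector of a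
closed correspondence `F ⊆ X × Y`.  If `F` is homologically consistent
(`ker H_n(p_F) ⊆ ker H_n(q_F)` for all `n`), then for every `n` and every
`a ∈ H_n(F)` one has `H_n(f)(H_n(p_F)(a)) = H_n(q_F)(a)`, and `H_n(p_F)` is
surjective; hence `H_n(f)` is completely determined by the two projections of `F`. -/
theorem induced_map_from_consistent_correspondence
    {X Y : Type} [TopologicalSpace X] [TopologicalSpace Y]
    (R : Type) [CommRing R]
    (F : Set (X × Y)) (hFclosed : IsClosed F)
    (f : X → Y) (hf : Continuous f) (hsel : ∀ x : X, (x, f x) ∈ F)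
    (hFconsistent : ∀ n : ℕ,
      LinearMap.ker ((Hn R n).map (projX F)).hom ≤ LinearMap.ker ((Hn R n).map (projY F)).hom) :
    ∀ n : ℕ,
      (∀ a : (Hn R n).obj (corr F),
        (Hn R n).map (TopCat.ofHom ⟨f, hf⟩ : TopCat.of X ⟶ TopCat.of Y) ((Hn R n).map (projX F) a) =
          (Hn R n).map (projY F) a) ∧
      Function.Surjective ((Hn R n).map (projX F)) := by
  intro n
  let g : TopCat.of X ⟶ corr F :=
    TopCat.ofHom ⟨fun x => ⟨(x, f x), hsel x⟩, Continuous.subtype_mk (continuous_id.prodMk hf) _⟩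
  have hgp : g ≫ projX F = 𝟙 (TopCat.of X) := rfl
  have hgq : g ≫ projY F = (TopCat.ofHom ⟨f, hf⟩ : TopCat.of X ⟶ TopCat.of Y) := rfl
  have hp : ((Hn R n).map g ≫ (Hn R n).map (projX F)) = 𝟙 _ := by
    rw [← Functor.map_comp, hgp, CategoryTheory.Functor.map_id]
  have hq : ((Hn R n).map g ≫ (Hn R n).map (projY F)) =
      (Hn R n).map (TopCat.ofHom ⟨f, hf⟩ : TopCat.of X ⟶ TopCat.of Y) := by
    rw [← Functor.map_comp, hgq]
  constructor
  · intro a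
    have hb : (Hn R n).map (projX F) ((Hn R n).map g ((Hn R n).map (projX F) a))
        = (Hn R n).map (projX F) a := by
      have h2 : ∀ x, ((Hn R n).map g ≫ (Hn R n).map (projX F)) x = x := by
        intro x; rw [hp]; rfl
      exact h2 ((Hn R n).map (projX F) a)
    have hker : ((Hn R n).map g ((Hn R n).map (projX F) a)) - a ∈
        LinearMap.ker ((Hn R n).map (projX F)).hom := by
      simp [LinearMap.mem_ker, map_sub, hb]
    have := hFconsistent n hker
    rw [LinearMap.mem_ker, map_sub, sub_eq_zero] at this
    calc (Hn R n).map (TopCat.ofHom ⟨f, hf⟩ : TopCat.of X ⟶ TopCat.of Y) ((Hn R n).map (projX F) a)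
        = ((Hn R n).map g ≫ (Hn R n).map (projY F)) ((Hn R n).map (projX F) a) := by
          rw [hq]
      _ = (Hn R n).map (projY F) ((Hn R n).map g ((Hn R n).map (projX F) a)) := rfl
      _ = (Hn R n).map (projY F) a := this
  · intro x
    refine ⟨(Hn R n).map g x, ?_⟩
    have h2 : ∀ y, ((Hn R n).map g ≫ (Hn R n).map (projX F)) y = y := by
      intro y; rw [hp]; rfl
    exact h2 x
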